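/- For any minimizer m̄ ∈ ℝ^S of the piecewise-linear function Φ̄(x) = Σ_{s∈S} φ̄(x(s)) over an integral base-polyhedron B, where φ̄ is the piecewise-linear extension of k ↦ k², there exists an integral point m ∈ B ∩ ℤ^S minimizing Σ_{s∈S} x(s)² over B ∩ ℤ^S such that ⌊m̄⌋ ≤ m ≤ ⌈m̄⌉ componentwise. -/

import Mathlib

open Finset

/-- The piecewise-linear extension of `k ↦ k²`:
`φ̄(t) = (2k−1)|t| − k(k−1)` for `k−1 ≤ |t| ≤ k`, `k ∈ ℤ`. -/
noncomputable def phibar (t : ℝ) : ℝ :=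
  (2 * (⌈|t|⌉ : ℝ) - 1) * |t| - (⌈|t|⌉ : ℝ) * ((⌈|t|⌉ : ℝ) - 1)

lemma phibar_intCast (k : ℤ) : phibar (k : ℝ) = (k : ℝ) ^ 2 := by
  unfold phibar
  rw [← Int.cast_abs, Int.ceil_intCast]
  push_cast
  rw [← Int.cast_abs]
  have : ((|k| : ℤ) : ℝ) ^ 2 = (k:ℝ)^2 := by push_cast; rw [sq_abs]
  nlinarith [this]

lemma phibar_affine (n : ℤ) (t : ℝ) (h1 : (n : ℝ) ≤ t) (h2 : t ≤ n + 1) :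
    phibar t = (2 * n + 1) * t - n * (n + 1) := by
  rcases le_or_gt 0 n with hn | hn
  · rcases eq_or_lt_of_le h1 with he | hlt
    · rw [← he, phibar_intCast]; push_cast; ring
    · have ht0 : 0 ≤ t := le_trans (by exact_mod_cast hn : (0:ℝ) ≤ n) h1
      have habs : |t| = t := abs_of_nonneg ht0
      have hceil : ⌈|t|⌉ = n + 1 := by
        rw [habs]; exact Int.ceil_eq_iff.mpr ⟨by push_cast; linarith, by push_cast; linarith⟩
      unfold phibar; rw [hceil, habs]; push_cast; ring
  · have hn1 : n + 1 ≤ 0 := by omega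
    rcases eq_or_lt_of_le h2 with he | hlt
    · rw [he, show ((n:ℝ)+1) = ((n+1 : ℤ):ℝ) by push_cast; ring, phibar_intCast]; push_cast; ring
    · have ht0 : t ≤ 0 := le_trans h2 (by exact_mod_cast hn1 : ((n:ℝ)+1) ≤ 0)
      have habs : |t| = -t := abs_of_nonpos ht0
      have hceil : ⌈|t|⌉ = -n := by
        rw [habs]; exact Int.ceil_eq_iff.mpr ⟨by push_cast; linarith, by push_cast; linarith⟩
      unfold phibar; rw [hceil, habs]; push_cast; ring

theorem squareSum_proximity_of_piecewiseLinear_minimizer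
    {S : Type*} [Fintype S] [DecidableEq S]
    (b : Finset S → WithTop ℤ)
    (hsub : ∀ X Y : Finset S, b (X ∩ Y) + b (X ∪ Y) ≤ b X + b Y)
    (bS : ℤ) (hbS : b Finset.univ = (bS : WithTop ℤ))
    (B : Set (S → ℝ))
    (hB : B = {x : S → ℝ | (∑ s : S, x s) = (bS : ℝ) ∧
      ∀ Z : Finset S, ∀ m : ℤ, b Z = (m : WithTop ℤ) → ∑ s ∈ Z, x s ≤ (m : ℝ)})
    (hne : B.Nonempty)
    (mbar : S → ℝ) (hmbar : mbar ∈ B)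
    (hmin : ∀ x ∈ B, ∑ s : S, phibar (mbar s) ≤ ∑ s : S, phibar (x s)) :
    ∃ m : S → ℤ, (fun s => (m s : ℝ)) ∈ B ∧
      (∀ z : S → ℤ, (fun s => (z s : ℝ)) ∈ B →
        ∑ s : S, (m s) ^ 2 ≤ ∑ s : S, (z s) ^ 2) ∧
      ∀ s : S, ⌊mbar s⌋ ≤ m s ∧ m s ≤ ⌈mbar s⌉ := by
  classical
  have hmem : ∀ x : S → ℝ, x ∈ B ↔ ((∑ s : S, x s) = (bS : ℝ) ∧
      ∀ Z : Finset S, ∀ m : ℤ, b Z = (m : WithTop ℤ) → ∑ s ∈ Z, x s ≤ (m : ℝ)) := by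
    intro x; rw [hB]; exact Iff.rfl
  set lo : S → ℤ := fun s => ⌊mbar s⌋ with hlo
  set hi : S → ℤ := fun s => ⌈mbar s⌉ with hhi
  -- the integral case helper
  have intCase : ∀ x : S → ℝ, (∑ s : S, x s) = (bS : ℝ) →
      (∀ Z : Finset S, ∀ k : ℤ, b Z = (k : WithTop ℤ) → ∑ s ∈ Z, x s ≤ (k : ℝ)) →
      (∀ s : S, (lo s : ℝ) ≤ x s ∧ x s ≤ (hi s : ℝ)) →
      (∀ s : S, ∃ k : ℤ, x s = (k : ℝ)) →
      ∃ m : S → ℤ, (∑ s : S, ((m s : ℝ))) = (bS : ℝ) ∧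
        (∀ Z : Finset S, ∀ k : ℤ, b Z = (k : WithTop ℤ) → ∑ s ∈ Z, ((m s) : ℝ) ≤ (k : ℝ)) ∧
        (∀ s : S, lo s ≤ m s ∧ m s ≤ hi s) ∧
        (∑ s : S, phibar ((m s : ℝ)) ≤ ∑ s : S, phibar (x s)) := by
    intro x h1 h2 h3 h4
    choose m hm using h4
    have hx : ∀ s, (m s : ℝ) = x s := fun s => (hm s).symm
    refine ⟨m, ?_, ?_, ?_, ?_⟩
    · rw [Finset.sum_congr rfl (fun s _ => hx s)]; exact h1
    · intro Z k hk
      rw [Finset.sum_congr rfl (fun s _ => hx s)]; exact h2 Z k hk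
    · intro s
      constructor
      · exact_mod_cast (hx s) ▸ (h3 s).1
      · exact_mod_cast (hx s) ▸ (h3 s).2
    · rw [Finset.sum_congr rfl (fun s _ => by rw [hx s])]
  -- the key induction
  have key : ∀ n : ℕ, ∀ x : S → ℝ,
      ((univ.filter (fun s : S => ¬ ∃ k : ℤ, x s = (k:ℝ))).card
        + ((univ : Finset (Finset S)).filter
            (fun Z => ∃ m : ℤ, b Z = (m : WithTop ℤ) ∧ ∑ s ∈ Z, x s < (m:ℝ))).card ≤ n) →
      (∑ s : S, x s) = (bS : ℝ) →
      (∀ Z : Finset S, ∀ k : ℤ, b Z = (k : WithTop ℤ) → ∑ s ∈ Z, x s ≤ (k : ℝ)) →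
      (∀ s : S, (lo s : ℝ) ≤ x s ∧ x s ≤ (hi s : ℝ)) →
      ∃ m : S → ℤ, (∑ s : S, ((m s : ℝ))) = (bS:ℝ) ∧
        (∀ Z : Finset S, ∀ k : ℤ, b Z = (k : WithTop ℤ) → ∑ s ∈ Z, ((m s):ℝ) ≤ (k : ℝ)) ∧
        (∀ s : S, lo s ≤ m s ∧ m s ≤ hi s) ∧
        (∑ s : S, phibar ((m s : ℝ)) ≤ ∑ s : S, phibar (x s)) := by
    intro n
    induction n with
    | zero =>
      intro x hcard hx1 hx2 hbox
      refine intCase x hx1 hx2 hbox ?_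
      intro s
      by_contra h
      have hmem' : s ∈ univ.filter (fun s : S => ¬ ∃ k : ℤ, x s = (k:ℝ)) :=
        Finset.mem_filter.mpr ⟨mem_univ s, h⟩
      have := Finset.card_pos.mpr ⟨s, hmem'⟩
      omega
    | succ n ih =>
      intro x hcard hx1 hx2 hbox
      by_cases hint : ∀ s : S, ∃ k : ℤ, x s = (k:ℝ)
      · exact intCase x hx1 hx2 hbox hint
      push_neg at hint
      -- tight sets
      set Tight : Finset S → Prop :=
        fun Z => ∃ k : ℤ, b Z = (k : WithTop ℤ) ∧ ∑ s ∈ Z, x s = (k:ℝ) with hTight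
      have hlat : ∀ Z W : Finset S, Tight Z → Tight W → Tight (Z ∩ W) ∧ Tight (Z ∪ W) := by
        rintro Z W ⟨p, hp, hp2⟩ ⟨q, hq, hq2⟩
        have hle := hsub Z W
        rw [hp, hq] at hle
        have h1 : b (Z ∩ W) ≠ ⊤ := by
          intro h; rw [h, top_add] at hle
          exact absurd hle (by simp)
        have h2 : b (Z ∪ W) ≠ ⊤ := by
          intro h; rw [h, add_top] at hle
          exact absurd hle (by simp)
        obtain ⟨p', hp'⟩ := WithTop.ne_top_iff_exists.mp h1
        obtain ⟨q', hq'⟩ := WithTop.ne_top_iff_exists.mp h2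
        rw [← hp', ← hq'] at hle
        have hsum1 : p' + q' ≤ p + q := by exact_mod_cast hle
        have e1 : ∑ s ∈ Z ∩ W, x s ≤ (p' : ℝ) := hx2 _ _ hp'.symm
        have e2 : ∑ s ∈ Z ∪ W, x s ≤ (q' : ℝ) := hx2 _ _ hq'.symm
        have e3 : ∑ s ∈ Z ∪ W, x s + ∑ s ∈ Z ∩ W, x s = ∑ s ∈ Z, x s + ∑ s ∈ W, x s :=
          Finset.sum_union_inter
        have hpq : (p':ℝ) + (q':ℝ) ≤ (p:ℝ) + (q:ℝ) := by exact_mod_cast hsum1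
        rw [hp2, hq2] at e3
        exact ⟨⟨p', hp'.symm, by linarith⟩, ⟨q', hq'.symm, by linarith⟩⟩
      have htuniv : Tight univ := ⟨bS, hbS, hx1⟩
      -- minimal tight set containing s
      set T : S → Finset S :=
        fun s => ((univ : Finset (Finset S)).filter (fun Z => Tight Z ∧ s ∈ Z)).inf id with hT
      have hTfam : ∀ s : S,
          ((univ : Finset (Finset S)).filter (fun Z => Tight Z ∧ s ∈ Z)).Nonempty :=
        fun s => ⟨univ, Finset.mem_filter.mpr ⟨mem_univ _, htuniv, mem_univ s⟩⟩
      have hTtight : ∀ s : S, Tight (T s) ∧ s ∈ T s := by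
        intro s
        have main : ∀ (F : Finset (Finset S)), F.Nonempty →
            (∀ Z ∈ F, Tight Z ∧ s ∈ Z) → Tight (F.inf id) ∧ s ∈ F.inf id := by
          intro F hF
          induction hF using Finset.Nonempty.cons_induction with
          | singleton a => intro h; simpa using h a (by simp)
          | cons a F ha hF ih2 =>
            intro h
            have h1 := h a (Finset.mem_cons_self a F)
            have h2 := ih2 (fun Z hZ => h Z (Finset.mem_cons_of_mem hZ))
            rw [Finset.inf_cons]
            have h3 := (hlat a (F.inf id) h1.1 h2.1).1
            constructor
            · simpa [Finset.inf_eq_inter] using h3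
            · simp only [id_eq, Finset.inf_eq_inter, Finset.mem_inter]
              exact ⟨h1.2, h2.2⟩
        exact main _ (hTfam s) (fun Z hZ => (Finset.mem_filter.mp hZ).2)
      have hTmin : ∀ s Z, Tight Z → s ∈ Z → T s ⊆ Z := by
        intro s Z hZ hs
        have hZm : Z ∈ (univ : Finset (Finset S)).filter (fun W => Tight W ∧ s ∈ W) :=
          Finset.mem_filter.mpr ⟨mem_univ _, hZ, hs⟩
        have hle : ((univ : Finset (Finset S)).filter (fun W => Tight W ∧ s ∈ W)).inf id ≤ id Z :=
          Finset.inf_le hZm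
        exact hle
      -- pick fractional u minimizing card (T u)
      set Frac : Finset S := univ.filter (fun s : S => ¬ ∃ k : ℤ, x s = (k:ℝ)) with hFrac
      obtain ⟨s0, hs0⟩ := hint
      have hFne : Frac.Nonempty := ⟨s0, Finset.mem_filter.mpr ⟨mem_univ _, not_exists.mpr hs0⟩⟩
      obtain ⟨u, huF, humin⟩ := Finset.exists_min_image Frac (fun s => (T s).card) hFne
      have hufrac : ¬ ∃ k : ℤ, x u = (k:ℝ) := (Finset.mem_filter.mp huF).2
      -- integral sums over integral coordinates
      have intsum : ∀ (F : Finset S), (∀ s ∈ F, ∃ k : ℤ, x s = (k:ℝ)) →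
          ∃ K : ℤ, ∑ s ∈ F, x s = (K:ℝ) := by
        intro F
        induction F using Finset.induction with
        | empty => exact fun _ => ⟨0, by simp⟩
        | insert _ _ hnot ih2 =>
          intro h
          obtain ⟨k, hk⟩ := h _ (Finset.mem_insert_self _ _)
          obtain ⟨K, hK⟩ := ih2 (fun s hs => h s (Finset.mem_insert_of_mem hs))
          exact ⟨k + K, by rw [Finset.sum_insert hnot, hk, hK]; push_cast; ring⟩
      -- find a second fractional coordinate in T u
      have hw : ∃ w ∈ T u, w ≠ u ∧ ¬ ∃ k : ℤ, x w = (k:ℝ) := by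
        by_contra hcon
        push_neg at hcon
        obtain ⟨kT, hkT, hkT2⟩ := (hTtight u).1
        have hmemu : u ∈ T u := (hTtight u).2
        have hint' : ∀ s ∈ (T u).erase u, ∃ k : ℤ, x s = (k:ℝ) := by
          intro s hs
          exact hcon s (Finset.mem_of_mem_erase hs) (Finset.ne_of_mem_erase hs)
        obtain ⟨K, hK⟩ := intsum _ hint'
        have hsplit : x u + ∑ s ∈ (T u).erase u, x s = ∑ s ∈ T u, x s :=
          Finset.add_sum_erase _ _ hmemu
        exact hufrac ⟨kT - K, by push_cast; rw [← hkT2, ← hsplit, hK]; ring⟩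
      obtain ⟨w, hwTu, hwu, hwfrac⟩ := hw
      have hwF : w ∈ Frac := Finset.mem_filter.mpr ⟨mem_univ _, hwfrac⟩
      have hTwu : T w = T u :=
        Finset.eq_of_subset_of_card_le (hTmin w (T u) (hTtight u).1 hwTu) (humin w hwF)
      have hkey : ∀ Z, Tight Z → (u ∈ Z ↔ w ∈ Z) := by
        intro Z hZ
        constructor
        · intro hu; exact (hTmin u Z hZ hu) hwTu
        · intro hwZ
          exact (hTmin w Z hZ hwZ) (hTwu ▸ (hTtight u).2)
      -- the exchange move
      have hmove : ∀ p q : S, p ≠ q →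
          (¬ ∃ k : ℤ, x p = (k:ℝ)) → (¬ ∃ k : ℤ, x q = (k:ℝ)) →
          (∀ Z, Tight Z → (p ∈ Z ↔ q ∈ Z)) →
          ⌊x p⌋ ≤ ⌊x q⌋ →
          ∃ y : S → ℝ,
            ((univ.filter (fun s : S => ¬ ∃ k : ℤ, y s = (k:ℝ))).card
              + ((univ : Finset (Finset S)).filter
                (fun Z => ∃ m : ℤ, b Z = (m : WithTop ℤ) ∧ ∑ s ∈ Z, y s < (m:ℝ))).card ≤ n) ∧
            (∑ s : S, y s) = (bS : ℝ) ∧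
            (∀ Z : Finset S, ∀ k : ℤ, b Z = (k : WithTop ℤ) → ∑ s ∈ Z, y s ≤ (k:ℝ)) ∧
            (∀ s : S, (lo s : ℝ) ≤ y s ∧ y s ≤ (hi s:ℝ)) ∧
            (∑ s : S, phibar (y s) ≤ ∑ s : S, phibar (x s)) := by
        intro p q hpq hpfrac hqfrac hkeypq hfl
        have hpflt : (⌊x p⌋ : ℝ) < x p :=
          lt_of_le_of_ne (Int.floor_le _) (fun h => hpfrac ⟨⌊x p⌋, h.symm⟩)
        have hpclt : x p < (⌈x p⌉ : ℝ) :=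
          lt_of_le_of_ne (Int.le_ceil _) (fun h => hpfrac ⟨⌈x p⌉, h⟩)
        have hqflt : (⌊x q⌋ : ℝ) < x q :=
          lt_of_le_of_ne (Int.floor_le _) (fun h => hqfrac ⟨⌊x q⌋, h.symm⟩)
        have hqclt : x q < (⌈x q⌉ : ℝ) :=
          lt_of_le_of_ne (Int.le_ceil _) (fun h => hqfrac ⟨⌈x q⌉, h⟩)
        have hpcf : (⌈x p⌉:ℝ) ≤ (⌊x p⌋:ℝ) + 1 := by exact_mod_cast Int.ceil_le_floor_add_one (x p)
        have hqcf : (⌈x q⌉:ℝ) ≤ (⌊x q⌋:ℝ) + 1 := by exact_mod_cast Int.ceil_le_floor_add_one (x q)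
        set C : Finset (Finset S) :=
          (univ : Finset (Finset S)).filter (fun Z => p ∈ Z ∧ q ∉ Z ∧ b Z ≠ ⊤) with hC
        set slack : Finset S → ℝ := fun Z => (((b Z).untopD 0 : ℤ) : ℝ) - ∑ s ∈ Z, x s with hslack
        set A : Finset ℝ :=
          insert ((⌈x p⌉:ℝ) - x p) (insert (x q - (⌊x q⌋:ℝ)) (C.image slack)) with hA
        have hAne : A.Nonempty := ⟨_, Finset.mem_insert_self _ _⟩
        set α := A.min' hAne with halpha
        have hApos : ∀ a ∈ A, 0 < a := by
          intro a ha
          rcases Finset.mem_insert.mp ha with h | h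
          · rw [h]; linarith
          rcases Finset.mem_insert.mp h with h | h
          · rw [h]; linarith
          obtain ⟨Z, hZ, rfl⟩ := Finset.mem_image.mp h
          obtain ⟨-, hp', hq', hbz⟩ := Finset.mem_filter.mp hZ
          obtain ⟨m, hm⟩ := WithTop.ne_top_iff_exists.mp hbz
          have h1 : ∑ s ∈ Z, x s ≤ (m:ℝ) := hx2 Z m hm.symm
          have h2 : ∑ s ∈ Z, x s ≠ (m:ℝ) := by
            intro h
            exact hq' ((hkeypq Z ⟨m, hm.symm, h⟩).mp hp')
          have huntop : (b Z).untopD 0 = m := by rw [← hm]; rfl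
          rw [hslack]
          simp only [huntop]
          have := lt_of_le_of_ne h1 h2
          linarith
        have hαpos : 0 < α := hApos _ (A.min'_mem hAne)
        have hα1 : α ≤ (⌈x p⌉:ℝ) - x p := A.min'_le _ (Finset.mem_insert_self _ _)
        have hα2 : α ≤ x q - (⌊x q⌋:ℝ) :=
          A.min'_le _ (Finset.mem_insert_of_mem (Finset.mem_insert_self _ _))
        have hαslack : ∀ Z : Finset S, ∀ m : ℤ, p ∈ Z → q ∉ Z → b Z = (m : WithTop ℤ) →
            α ≤ (m:ℝ) - ∑ s ∈ Z, x s := by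
          intro Z m hp' hq' hm
          have hZC : Z ∈ C := Finset.mem_filter.mpr
            ⟨mem_univ _, hp', hq', by rw [hm]; exact WithTop.coe_ne_top⟩
          have hsl : slack Z = (m:ℝ) - ∑ s ∈ Z, x s := by
            rw [hslack]
            have : (b Z).untopD 0 = m := by rw [hm]; rfl
            simp only [this]
          calc α ≤ slack Z := A.min'_le _
                (Finset.mem_insert_of_mem (Finset.mem_insert_of_mem (Finset.mem_image_of_mem _ hZC)))
            _ = _ := hsl
        set y : S → ℝ := fun s => if s = p then x s + α else if s = q then x s - α else x s with hy
        have hyp : y p = x p + α := by simp [hy]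
        have hyq : y q = x q - α := by
          have hqp : q ≠ p := Ne.symm hpq
          simp [hy, hqp]
        have hyo : ∀ s, s ≠ p → s ≠ q → y s = x s := by
          intro s h1 h2; simp [hy, h1, h2]
        have hsumZ : ∀ Z : Finset S, ∑ s ∈ Z, y s = ∑ s ∈ Z, x s
            + ((if p ∈ Z then α else 0) - (if q ∈ Z then α else 0)) := by
          intro Z
          have hpt : ∀ s, y s = x s + ((if s = p then α else 0) - (if s = q then α else 0)) := by
            intro s
            by_cases h1 : s = p
            · rw [h1, hyp, if_pos rfl, if_neg hpq]; ring
            · by_cases h2 : s = q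
              · rw [h2, hyq, if_neg (Ne.symm hpq), if_pos rfl]; ring
              · rw [hyo s h1 h2, if_neg h1, if_neg h2]; ring
          rw [Finset.sum_congr rfl (fun s _ => hpt s), Finset.sum_add_distrib,
            Finset.sum_sub_distrib, Finset.sum_ite_eq' Z p (fun _ => α),
            Finset.sum_ite_eq' Z q (fun _ => α)]
        have hy1 : ∑ s : S, y s = (bS:ℝ) := by
          rw [hsumZ univ]
          simp [hx1]
        have hy2 : ∀ Z : Finset S, ∀ k : ℤ, b Z = (k : WithTop ℤ) → ∑ s ∈ Z, y s ≤ (k:ℝ) := by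
          intro Z k hk
          have hxZ := hx2 Z k hk
          rw [hsumZ Z]
          by_cases h1 : p ∈ Z <;> by_cases h2 : q ∈ Z <;> simp only [h1, h2, if_true, if_false]
          · linarith
          · have := hαslack Z k h1 h2 hk; linarith
          · linarith
          · linarith
        have hy3 : ∀ s : S, (lo s:ℝ) ≤ y s ∧ y s ≤ (hi s:ℝ) := by
          intro s
          by_cases h1 : s = p
          · subst h1
            have hcl : (⌈x s⌉:ℝ) ≤ (hi s:ℝ) := by
              exact_mod_cast Int.ceil_le.mpr (hbox s).2
            rw [hyp]
            exact ⟨by linarith [(hbox s).1], by linarith⟩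
          · by_cases h2 : s = q
            · subst h2
              have hfl' : (lo s:ℝ) ≤ (⌊x s⌋:ℝ) := by
                exact_mod_cast Int.le_floor.mpr (hbox s).1
              rw [hyq]
              exact ⟨by linarith, by linarith [(hbox s).2]⟩
            · rw [hyo s h1 h2]; exact hbox s
        have hyphi : ∑ s : S, phibar (y s) ≤ ∑ s : S, phibar (x s) := by
          have hqmem : q ∈ univ.erase p := Finset.mem_erase.mpr ⟨fun h => hpq h.symm, mem_univ q⟩
          have hsplit : ∀ f : S → ℝ,
              ∑ s : S, f s = f p + (f q + ∑ s ∈ (univ.erase p).erase q, f s) := by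
            intro f
            rw [Finset.add_sum_erase _ f hqmem, Finset.add_sum_erase _ f (mem_univ p)]
          rw [hsplit (fun s => phibar (y s)), hsplit (fun s => phibar (x s))]
          have hrest : ∑ s ∈ (univ.erase p).erase q, phibar (y s)
              = ∑ s ∈ (univ.erase p).erase q, phibar (x s) := by
            refine Finset.sum_congr rfl ?_
            intro s hs
            obtain ⟨hs1, hs2⟩ := Finset.mem_erase.mp hs
            obtain ⟨hs3, -⟩ := Finset.mem_erase.mp hs2
            rw [hyo s hs3 hs1]
          rw [hrest]
          have hfp : phibar (x p) = (2*(⌊x p⌋:ℝ)+1) * x p - (⌊x p⌋:ℝ)*((⌊x p⌋:ℝ)+1) := by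
            have := phibar_affine ⌊x p⌋ (x p) (Int.floor_le _) (by linarith)
            push_cast at this ⊢; linarith [this]
          have hfq : phibar (x q) = (2*(⌊x q⌋:ℝ)+1) * x q - (⌊x q⌋:ℝ)*((⌊x q⌋:ℝ)+1) := by
            have := phibar_affine ⌊x q⌋ (x q) (Int.floor_le _) (by linarith)
            push_cast at this ⊢; linarith [this]
          have hfyp : phibar (y p) = (2*(⌊x p⌋:ℝ)+1) * (x p + α) - (⌊x p⌋:ℝ)*((⌊x p⌋:ℝ)+1) := by
            rw [hyp]
            have := phibar_affine ⌊x p⌋ (x p + α) (by linarith) (by linarith)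
            push_cast at this ⊢; linarith [this]
          have hfyq : phibar (y q) = (2*(⌊x q⌋:ℝ)+1) * (x q - α) - (⌊x q⌋:ℝ)*((⌊x q⌋:ℝ)+1) := by
            rw [hyq]
            have := phibar_affine ⌊x q⌋ (x q - α) (by linarith) (by linarith)
            push_cast at this ⊢; linarith [this]
          rw [hfyp, hfyq, hfp, hfq]
          have hflr : (⌊x p⌋:ℝ) ≤ (⌊x q⌋:ℝ) := by exact_mod_cast hfl
          nlinarith [hαpos, hflr]
        -- measure decrease
        set Fy : Finset S := univ.filter (fun s : S => ¬ ∃ k : ℤ, y s = (k:ℝ)) with hFy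
        set Fx : Finset S := univ.filter (fun s : S => ¬ ∃ k : ℤ, x s = (k:ℝ)) with hFx
        set Gy : Finset (Finset S) := (univ : Finset (Finset S)).filter
          (fun Z => ∃ m : ℤ, b Z = (m : WithTop ℤ) ∧ ∑ s ∈ Z, y s < (m:ℝ)) with hGy
        set Gx : Finset (Finset S) := (univ : Finset (Finset S)).filter
          (fun Z => ∃ m : ℤ, b Z = (m : WithTop ℤ) ∧ ∑ s ∈ Z, x s < (m:ℝ)) with hGx
        have hfsub : Fy ⊆ Fx := by
          intro s hs
          rw [hFy, Finset.mem_filter] at hs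
          rw [hFx, Finset.mem_filter]
          refine ⟨mem_univ s, ?_⟩
          by_cases h1 : s = p
          · subst h1; exact hpfrac
          · by_cases h2 : s = q
            · subst h2; exact hqfrac
            · rw [hyo s h1 h2] at hs; exact hs.2
        have hssub : Gy ⊆ Gx := by
          intro Z hZ
          rw [hGy, Finset.mem_filter] at hZ
          obtain ⟨-, m, hm, hlt⟩ := hZ
          rw [hGx, Finset.mem_filter]
          refine ⟨mem_univ _, m, hm, ?_⟩
          rcases lt_or_eq_of_le (hx2 Z m hm) with h | h
          · exact h
          · exfalso
            have hiff := hkeypq Z ⟨m, hm, h⟩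
            rw [hsumZ Z] at hlt
            by_cases h1 : p ∈ Z
            · rw [if_pos h1, if_pos (hiff.mp h1)] at hlt; linarith
            · rw [if_neg h1, if_neg (fun hq' => h1 (hiff.mpr hq'))] at hlt; linarith
        have hstrict : Fy.card + Gy.card ≤ n := by
          have hcx : Fx.card + Gx.card ≤ n + 1 := hcard
          have hly := Finset.card_le_card hfsub
          have hlz := Finset.card_le_card hssub
          rcases Finset.mem_insert.mp (A.min'_mem hAne) with hc | hmem2
          · have hpFy : p ∉ Fy := by
              rw [hFy, Finset.mem_filter]
              push_neg
              intro _
              exact ⟨⌈x p⌉, by rw [hyp, halpha, hc]; ring⟩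
            have hpFx : p ∈ Fx := Finset.mem_filter.mpr ⟨mem_univ _, hpfrac⟩
            have : Fy.card < Fx.card :=
              Finset.card_lt_card ⟨hfsub, fun hall => hpFy (hall hpFx)⟩
            omega
          rcases Finset.mem_insert.mp hmem2 with hc | hc
          · have hqFy : q ∉ Fy := by
              rw [hFy, Finset.mem_filter]
              push_neg
              intro _
              exact ⟨⌊x q⌋, by rw [hyq, halpha, hc]; ring⟩
            have hqFx : q ∈ Fx := Finset.mem_filter.mpr ⟨mem_univ _, hqfrac⟩
            have : Fy.card < Fx.card :=
              Finset.card_lt_card ⟨hfsub, fun hall => hqFy (hall hqFx)⟩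
            omega
          · obtain ⟨Z0, hZ0C, hZ0⟩ := Finset.mem_image.mp hc
            obtain ⟨-, hp0, hq0, hb0⟩ := Finset.mem_filter.mp hZ0C
            obtain ⟨m0, hm0⟩ := WithTop.ne_top_iff_exists.mp hb0
            have huntop : (b Z0).untopD 0 = m0 := by rw [← hm0]; rfl
            have hsl0 : α = (m0:ℝ) - ∑ s ∈ Z0, x s := by
              rw [halpha, ← hZ0]; simp only [hslack, huntop]
            have hZ0Gx : Z0 ∈ Gx := by
              rw [hGx, Finset.mem_filter]
              exact ⟨mem_univ _, m0, hm0.symm, by linarith [hαpos, hsl0]⟩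
            have hZ0Gy : Z0 ∉ Gy := by
              rw [hGy, Finset.mem_filter]
              push_neg
              rintro - m1 hm1
              have : m1 = m0 := by
                rw [hm1] at hm0
                exact_mod_cast hm0.symm
              subst this
              rw [hsumZ Z0, if_pos hp0, if_neg hq0]
              linarith [hsl0]
            have : Gy.card < Gx.card :=
              Finset.card_lt_card ⟨hssub, fun hall => hZ0Gy (hall hZ0Gx)⟩
            omega
        exact ⟨y, hstrict, hy1, hy2, hy3, hyphi⟩
      rcases le_total ⌊x u⌋ ⌊x w⌋ with h | h
      · obtain ⟨y, hn1, hn2, hn3, hn4, hn5⟩ :=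
          hmove u w (fun h' => hwu h'.symm) hufrac hwfrac hkey h
        obtain ⟨m, hm1, hm2, hm3, hm4⟩ := ih y hn1 hn2 hn3 hn4
        exact ⟨m, hm1, hm2, hm3, le_trans hm4 hn5⟩
      · obtain ⟨y, hn1, hn2, hn3, hn4, hn5⟩ :=
          hmove w u hwu hwfrac hufrac (fun Z hZ => (hkey Z hZ).symm) h
        obtain ⟨m, hm1, hm2, hm3, hm4⟩ := ih y hn1 hn2 hn3 hn4
        exact ⟨m, hm1, hm2, hm3, le_trans hm4 hn5⟩
  -- assemble
  obtain ⟨hmb1, hmb2⟩ := (hmem mbar).mp hmbar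
  obtain ⟨m, hk1, hk2, hk3, hk4⟩ := key _ mbar le_rfl hmb1 hmb2
    (fun s => ⟨Int.floor_le _, Int.le_ceil _⟩)
  refine ⟨m, (hmem _).mpr ⟨hk1, hk2⟩, ?_, hk3⟩
  intro z hz
  have h6 : ∑ s : S, phibar ((m s:ℝ)) ≤ ∑ s : S, phibar ((z s:ℝ)) :=
    le_trans hk4 (hmin _ hz)
  have e1 : ∑ s : S, phibar ((m s:ℝ)) = ((∑ s : S, (m s)^2 : ℤ) : ℝ) := by
    push_cast
    exact Finset.sum_congr rfl (fun s _ => by rw [phibar_intCast])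
  have e2 : ∑ s : S, phibar ((z s:ℝ)) = ((∑ s : S, (z s)^2 : ℤ) : ℝ) := by
    push_cast
    exact Finset.sum_congr rfl (fun s _ => by rw [phibar_intCast])
  rw [e1, e2] at h6
  exact_mod_cast h6
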